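/- arXiv:2006.07057 — 4 statements merged into one kernel-verified Lean document; each statement's English description precedes it below -/
import Mathlib

section
/- Let q > 0, let ρ_q be the Gaussian measure N(0, (qε/4)·Id) on R^d, and define φ(x,u) = (2q)^{d/4}·exp(-2ε⁻¹‖x-u‖²)·exp(ε⁻¹‖u‖²/q). Then for all x, y ∈ R^d, exp(-ε⁻¹‖x-y‖²) = ∫_{R^d} φ(x,u)·φ(y,u) dρ_q(u). -/
open Real MeasureTheory ProbabilityTheory

/-- The centered Gaussian measure `N(0, σ² Id)` on `EuclideanSpace ℝ (Fin d)`,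
built as a product of one-dimensional Gaussians. -/
noncomputable def gaussianPi (d : ℕ) (σ2 : ℝ) :
    Measure (EuclideanSpace ℝ (Fin d)) :=
  (Measure.pi fun _ : Fin d => gaussianReal 0 σ2.toNNReal).map
    (MeasurableEquiv.toLp 2 (Fin d → ℝ))

lemma pi_int_aux (d : ℕ) (v : NNReal) (f : Fin d → ℝ → ℝ) :
    ∫ u : Fin d → ℝ, ∏ i, f i (u i) ∂(Measure.pi fun _ => gaussianReal 0 v)
      = ∏ i, ∫ t, f i t ∂(gaussianReal 0 v) := by
  letI : MeasureSpace ℝ := ⟨gaussianReal 0 v⟩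
  haveI : SigmaFinite (volume : Measure ℝ) := by
    have : IsProbabilityMeasure (volume : Measure ℝ) :=
      (inferInstance : IsProbabilityMeasure (gaussianReal 0 v))
    infer_instance
  exact MeasureTheory.integral_fintype_prod_eq_prod f

lemma one_dim_aux (ε q : ℝ) (hε : 0 < ε) (hq : 0 < q) (a b : ℝ) :
    ∫ t, Real.sqrt (2*q) * exp (-2*ε⁻¹*(a-t)^2 - 2*ε⁻¹*(b-t)^2 + 2*ε⁻¹*t^2/q)
      ∂(gaussianReal 0 (q*ε/4).toNNReal) = exp (-ε⁻¹*(a-b)^2) := by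
  have hπ := Real.pi_pos
  have hv : (q*ε/4).toNNReal ≠ 0 := by
    simp only [ne_eq, Real.toNNReal_eq_zero, not_le]
    positivity
  have hvr : ((q*ε/4).toNNReal : ℝ) = q*ε/4 := Real.coe_toNNReal _ (by positivity)
  rw [gaussianReal_of_var_ne_zero _ hv]
  have hpdf : gaussianPDF 0 (q*ε/4).toNNReal
      = fun t => ((gaussianPDFReal 0 (q*ε/4).toNNReal t).toNNReal : ENNReal) := by
    funext t; simp [gaussianPDF, ENNReal.ofReal]
  rw [hpdf, integral_withDensity_eq_integral_smul
    ((measurable_gaussianPDFReal _ _).real_toNNReal) _]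
  have key : ∀ t : ℝ, (gaussianPDFReal 0 (q*ε/4).toNNReal t).toNNReal •
        (Real.sqrt (2*q) * exp (-2*ε⁻¹*(a-t)^2 - 2*ε⁻¹*(b-t)^2 + 2*ε⁻¹*t^2/q))
      = (Real.sqrt (2 * π * (q*ε/4)))⁻¹ * Real.sqrt (2*q) * exp (-ε⁻¹*(a-b)^2)
          * exp (-(4*ε⁻¹) * (t - (a+b)/2)^2) := by
    intro t
    rw [NNReal.smul_def, Real.coe_toNNReal _ (gaussianPDFReal_nonneg _ _ _)]
    simp only [gaussianPDFReal, hvr, smul_eq_mul, sub_zero]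
    rw [show ∀ c1 c2 e1 e2 : ℝ, c1 * exp e1 * (c2 * exp e2) = c1 * c2 * exp (e1 + e2)
      from by intros; rw [exp_add]; ring]
    conv_rhs => rw [mul_assoc, ← exp_add]
    congr 1
    have hq' : q ≠ 0 := hq.ne'
    field_simp
    ring_nf
    congr 1
    field_simp
  simp_rw [key]
  rw [integral_const_mul, integral_sub_right_eq_self (fun t => exp (-(4*ε⁻¹) * t^2)) ((a+b)/2),
    integral_gaussian]
  rw [show (Real.sqrt (2 * π * (q*ε/4)))⁻¹ * Real.sqrt (2*q) * exp (-ε⁻¹*(a-b)^2)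
        * Real.sqrt (π / (4*ε⁻¹))
      = (Real.sqrt (2 * π * (q*ε/4)))⁻¹ * (Real.sqrt (2*q) * Real.sqrt (π / (4*ε⁻¹)))
        * exp (-ε⁻¹*(a-b)^2) from by ring]
  rw [← Real.sqrt_mul (by positivity)]
  rw [show 2*q * (π / (4*ε⁻¹)) = 2 * π * (q*ε/4) from by field_simp]
  rw [inv_mul_cancel₀ (by positivity)]
  ring

theorem gaussian_kernel_feature_decomposition (d : ℕ) (ε : ℝ) (hε : 0 < ε)
    (q : ℝ) (hq : 0 < q)
    (φ : EuclideanSpace ℝ (Fin d) → EuclideanSpace ℝ (Fin d) → ℝ)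
    (hφ : ∀ x u, φ x u =
      (2 * q) ^ ((d : ℝ) / 4) * exp (-2 * ε⁻¹ * ‖x - u‖ ^ 2) * exp (ε⁻¹ * ‖u‖ ^ 2 / q))
    (x y : EuclideanSpace ℝ (Fin d)) :
    exp (-ε⁻¹ * ‖x - y‖ ^ 2) = ∫ u, φ x u * φ y u ∂(gaussianPi d (q * ε / 4)) := by
  have hns : ∀ w : EuclideanSpace ℝ (Fin d), ‖w‖^2 = ∑ i, w i ^ 2 := by
    intro w
    rw [EuclideanSpace.norm_eq, Real.sq_sqrt (by positivity)]
    simp [Real.norm_eq_abs, sq_abs]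
  have hK : (2*q) ^ ((d:ℝ)/4) * (2*q) ^ ((d:ℝ)/4) = Real.sqrt (2*q) ^ d := by
    rw [← Real.rpow_natCast (Real.sqrt (2*q)) d, Real.sqrt_eq_rpow,
      ← Real.rpow_add (by positivity), ← Real.rpow_mul (by positivity)]
    congr 1
    ring
  set f : Fin d → ℝ → ℝ := fun i t =>
    Real.sqrt (2*q) * exp (-2*ε⁻¹*(x i - t)^2 - 2*ε⁻¹*(y i - t)^2 + 2*ε⁻¹*t^2/q) with hf
  have hprod : ∀ u : EuclideanSpace ℝ (Fin d), φ x u * φ y u = ∏ i, f i (u i) := by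
    intro u
    have h1 : ‖x - u‖^2 = ∑ i, (x i - u i)^2 := by
      rw [hns]; exact Finset.sum_congr rfl fun i _ => by simp
    have h2 : ‖y - u‖^2 = ∑ i, (y i - u i)^2 := by
      rw [hns]; exact Finset.sum_congr rfl fun i _ => by simp
    rw [hφ, hφ, h1, h2, hns u, hf]
    rw [Finset.prod_mul_distrib, Finset.prod_const, Finset.card_univ, Fintype.card_fin,
      ← Real.exp_sum]
    rw [show ∀ (k a b c e : ℝ), k * exp a * exp b * (k * exp c * exp e)
        = (k*k) * exp (a+b+c+e) from by intros; rw [exp_add, exp_add, exp_add]; ring]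
    rw [hK]
    congr 1
    simp only [Finset.mul_sum, Finset.sum_div, ← Finset.sum_add_distrib]
    congr 1
    exact Finset.sum_congr rfl fun i _ => by ring
  simp_rw [hprod]
  rw [show gaussianPi d (q*ε/4) = (Measure.pi fun _ : Fin d => gaussianReal 0 (q*ε/4).toNNReal).map
    (MeasurableEquiv.toLp 2 (Fin d → ℝ)) from rfl, integral_map_equiv]
  erw [pi_int_aux]
  have h1d : ∀ i : Fin d, ∫ t, f i t ∂(gaussianReal 0 (q*ε/4).toNNReal)
      = exp (-ε⁻¹ * (x i - y i)^2) := fun i => one_dim_aux ε q hε hq (x i) (y i)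
  have hxy : ‖x - y‖^2 = ∑ i, (x i - y i)^2 := by
    rw [hns]; exact Finset.sum_congr rfl fun i _ => by simp
  rw [hxy]
  simp_rw [h1d, ← Real.exp_sum]
  congr 1
  rw [Finset.mul_sum]
end

section
/- Let k and k_θ be two positive kernel matrices (entrywise positive n×n matrices) and suppose for all entries (i,j), |K_θ[i,j]/K[i,j] - 1| ≤ τ with 0 < τ < 1. Then for all α, β ∈ R^n, |f(α,β) - f_θ(α,β)| ≤ ε·τ·⟨e^{α/ε}, K e^{β/ε}⟩ and |f(α,β) - f_θ(α,β)| ≤ ε·(τ/(1-τ))·⟨e^{α/ε}, K_θ e^{β/ε}⟩, where f(α,β) = ⟨α,a⟩ + ⟨β,b⟩ - ε⟨e^{α/ε}, K e^{β/ε}⟩ and f_θ is defined analogously with K_θ. -/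
open Real

theorem dual_objective_perturbation_bound (n : ℕ) (ε : ℝ) (hε : 0 < ε)
    (a b : Fin n → ℝ) (ha : ∀ i, 0 < a i) (hb : ∀ i, 0 < b i)
    (ha1 : ∑ i, a i = 1) (hb1 : ∑ i, b i = 1)
    (K Kθ : Matrix (Fin n) (Fin n) ℝ)
    (hK : ∀ i j, 0 < K i j) (hKθ : ∀ i j, 0 < Kθ i j)
    (τ : ℝ) (hτ0 : 0 < τ) (hτ1 : τ < 1)
    (hratio : ∀ i j, |Kθ i j / K i j - 1| ≤ τ)
    (f fθ : (Fin n → ℝ) → (Fin n → ℝ) → ℝ)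
    (hf : ∀ α β, f α β = ∑ i, α i * a i + ∑ j, β j * b j -
      ε * ∑ i, ∑ j, exp (α i / ε) * K i j * exp (β j / ε))
    (hfθ : ∀ α β, fθ α β = ∑ i, α i * a i + ∑ j, β j * b j -
      ε * ∑ i, ∑ j, exp (α i / ε) * Kθ i j * exp (β j / ε))
    (α β : Fin n → ℝ) :
    |f α β - fθ α β| ≤ ε * τ * ∑ i, ∑ j, exp (α i / ε) * K i j * exp (β j / ε) ∧
    |f α β - fθ α β| ≤
      ε * (τ / (1 - τ)) * ∑ i, ∑ j, exp (α i / ε) * Kθ i j * exp (β j / ε) := by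
  have habs : ∀ i j, |Kθ i j - K i j| ≤ τ * K i j := by
    intro i j
    have hKpos := hK i j
    have heq : Kθ i j - K i j = (Kθ i j / K i j - 1) * K i j := by
      field_simp
    rw [heq, abs_mul, abs_of_pos hKpos]
    exact mul_le_mul_of_nonneg_right (hratio i j) hKpos.le
  have hKle : ∀ i j, K i j ≤ Kθ i j / (1 - τ) := by
    intro i j
    have h := abs_le.mp (habs i j)
    rw [le_div_iff₀ (by linarith)]
    nlinarith
  have hd : f α β - fθ α β =
      ε * ∑ i, ∑ j, exp (α i / ε) * (Kθ i j - K i j) * exp (β j / ε) := by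
    rw [hf, hfθ]
    have h2 : ε * ∑ i, ∑ j, exp (α i / ε) * (Kθ i j - K i j) * exp (β j / ε)
        = ε * ∑ i, ∑ j, exp (α i / ε) * Kθ i j * exp (β j / ε)
          - ε * ∑ i, ∑ j, exp (α i / ε) * K i j * exp (β j / ε) := by
      rw [← mul_sub, ← Finset.sum_sub_distrib]
      congr 1
      refine Finset.sum_congr rfl fun i _ => ?_
      rw [← Finset.sum_sub_distrib]
      exact Finset.sum_congr rfl fun j _ => by ring
    rw [h2]; ring
  have key : |f α β - fθ α β| ≤
      ε * ∑ i, ∑ j, exp (α i / ε) * (τ * K i j) * exp (β j / ε) := by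
    rw [hd, abs_mul, abs_of_pos hε]
    apply mul_le_mul_of_nonneg_left _ hε.le
    calc |∑ i, ∑ j, exp (α i / ε) * (Kθ i j - K i j) * exp (β j / ε)|
        ≤ ∑ i, |∑ j, exp (α i / ε) * (Kθ i j - K i j) * exp (β j / ε)| :=
          Finset.abs_sum_le_sum_abs _ _
      _ ≤ ∑ i, ∑ j, |exp (α i / ε) * (Kθ i j - K i j) * exp (β j / ε)| := by
          gcongr with i _
          exact Finset.abs_sum_le_sum_abs _ _
      _ ≤ ∑ i, ∑ j, exp (α i / ε) * (τ * K i j) * exp (β j / ε) := by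
          refine Finset.sum_le_sum fun i _ => Finset.sum_le_sum fun j _ => ?_
          rw [abs_mul, abs_mul, abs_of_pos (exp_pos _), abs_of_pos (exp_pos _)]
          have h1 : exp (α i / ε) * |Kθ i j - K i j| ≤ exp (α i / ε) * (τ * K i j) :=
            mul_le_mul_of_nonneg_left (habs i j) (exp_pos _).le
          exact mul_le_mul_of_nonneg_right h1 (exp_pos _).le
  constructor
  · calc |f α β - fθ α β|
        ≤ ε * ∑ i, ∑ j, exp (α i / ε) * (τ * K i j) * exp (β j / ε) := key
      _ = ε * τ * ∑ i, ∑ j, exp (α i / ε) * K i j * exp (β j / ε) := by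
          simp only [Finset.mul_sum]
          exact Finset.sum_congr rfl fun i _ => Finset.sum_congr rfl fun j _ => by ring
  · calc |f α β - fθ α β|
        ≤ ε * ∑ i, ∑ j, exp (α i / ε) * (τ * K i j) * exp (β j / ε) := key
      _ ≤ ε * ∑ i, ∑ j, exp (α i / ε) * (τ * (Kθ i j / (1 - τ))) * exp (β j / ε) := by
          apply mul_le_mul_of_nonneg_left _ hε.le
          refine Finset.sum_le_sum fun i _ => Finset.sum_le_sum fun j _ => ?_
          have h1 : τ * K i j ≤ τ * (Kθ i j / (1 - τ)) :=
            mul_le_mul_of_nonneg_left (hKle i j) hτ0.le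
          have h2 : exp (α i / ε) * (τ * K i j) ≤ exp (α i / ε) * (τ * (Kθ i j / (1 - τ))) :=
            mul_le_mul_of_nonneg_left h1 (exp_pos _).le
          exact mul_le_mul_of_nonneg_right h2 (exp_pos _).le
      _ = ε * (τ / (1 - τ)) * ∑ i, ∑ j, exp (α i / ε) * Kθ i j * exp (β j / ε) := by
          simp only [Finset.mul_sum]
          exact Finset.sum_congr rfl fun i _ => Finset.sum_congr rfl fun j _ => by ring
end

section
/- Let (α*, β*) be an optimal solution of the entropic OT dual with positive kernel matrix K ∈ R_{>0}^{n×n} and marginals a, b ∈ Δ_n. Then max_i α*_i - min_i α*_i ≤ ε·R(K) and max_j β*_j - min_j β*_j ≤ ε·R(K), where R(K) = -log( ι · (min_{i,j} K[i,j]) / (max_{i,j} K[i,j]) ) and ι = min_{i,j}(a_i, b_j). -/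
open Real

/-- First-order condition: a global max of `x ↦ x*c - ε*(exp(x/ε)*S) + C` satisfies
`exp(x0/ε)*S = c`. -/
lemma foc_aux (ε : ℝ) (hε : 0 < ε) (c S C x0 : ℝ)
    (h : ∀ x, x * c - ε * (exp (x / ε) * S) + C ≤ x0 * c - ε * (exp (x0 / ε) * S) + C) :
    exp (x0 / ε) * S = c := by
  have h1 : HasDerivAt (fun x : ℝ => x * c) (1 * c) x0 := (hasDerivAt_id x0).mul_const c
  have h2 : HasDerivAt (fun x : ℝ => x / ε) (1 / ε) x0 := (hasDerivAt_id x0).div_const ε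
  have h3 : HasDerivAt (fun x : ℝ => exp (x / ε) * S) (exp (x0 / ε) * (1 / ε) * S) x0 :=
    h2.exp.mul_const S
  have h4 : HasDerivAt (fun x : ℝ => x * c - ε * (exp (x / ε) * S) + C)
      (1 * c - ε * (exp (x0 / ε) * (1 / ε) * S)) x0 := (h1.sub (h3.const_mul ε)).add_const C
  have hloc : IsLocalMax (fun x : ℝ => x * c - ε * (exp (x / ε) * S) + C) x0 :=
    Filter.Eventually.of_forall h
  have h0 := hloc.hasDerivAt_eq_zero h4
  have hεne : ε ≠ 0 := ne_of_gt hε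
  field_simp at h0
  linarith

lemma osc_aux (n : ℕ) [Nonempty (Fin n)] (ε ι Km KM E : ℝ) (hε : 0 < ε) (hι : 0 < ι)
    (hKm : 0 < Km) (γ c S : Fin n → ℝ)
    (hc : ∀ i, exp (γ i / ε) * S i = c i)
    (hc1 : ∀ i, c i ≤ 1) (hcι : ∀ i, ι ≤ c i)
    (hE : 0 < E)
    (hSl : ∀ i, Km * E ≤ S i) (hSu : ∀ i, S i ≤ KM * E) :
    (⨆ i, γ i) - ⨅ i, γ i ≤ ε * (-log (ι * Km / KM)) := by
  have i₀ : Fin n := Classical.arbitrary _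
  have hKM : 0 < KM := by
    have := (hSl i₀).trans (hSu i₀)
    have hKmKM : Km ≤ KM := le_of_mul_le_mul_right this hE
    exact lt_of_lt_of_le hKm hKmKM
  have hSpos : ∀ k, 0 < S k := fun k => lt_of_lt_of_le (mul_pos hKm hE) (hSl k)
  have hcpos : ∀ k, 0 < c k := fun k => lt_of_lt_of_le hι (hcι k)
  have key : ∀ i i', γ i - γ i' ≤ ε * (-log (ι * Km / KM)) := by
    intro i i'
    have e0 : ∀ k, exp (γ k / ε) = c k / S k := fun k =>
      (eq_div_iff (ne_of_gt (hSpos k))).2 (hc k)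
    have e1 : exp ((γ i - γ i') / ε) = (c i * S i') / (c i' * S i) := by
      rw [sub_div, Real.exp_sub, e0, e0]
      field_simp
    have hratio : exp ((γ i - γ i') / ε) ≤ KM / (ι * Km) := by
      rw [e1]
      have h2 : (c i * S i') / (c i' * S i) ≤ (1 * (KM * E)) / (ι * (Km * E)) :=
        div_le_div₀ (by positivity)
          (mul_le_mul (hc1 i) (hSu i') (hSpos i').le zero_le_one)
          (by positivity)
          (mul_le_mul (hcι i') (hSl i) (by positivity) (hcpos i').le)
      have h3 : (1 * (KM * E)) / (ι * (Km * E)) = KM / (ι * Km) := by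
        field_simp
      linarith [h2, h3.le, h3.ge]
    have hlog : (γ i - γ i') / ε ≤ log (KM / (ι * Km)) :=
      (le_log_iff_exp_le (by positivity)).2 hratio
    have hneg : -log (ι * Km / KM) = log (KM / (ι * Km)) := by
      rw [← Real.log_inv]
      congr 1
      field_simp
    rw [hneg]
    calc γ i - γ i' = ε * ((γ i - γ i') / ε) := by field_simp
      _ ≤ ε * log (KM / (ι * Km)) := mul_le_mul_of_nonneg_left hlog hε.le
  obtain ⟨imax, himax⟩ := Finite.exists_max γ
  obtain ⟨imin, himin⟩ := Finite.exists_min γ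
  have h1 : (⨆ i, γ i) ≤ γ imax := ciSup_le himax
  have h2 : γ imin ≤ ⨅ i, γ i := le_ciInf himin
  linarith [key imax imin]

theorem dual_optimal_oscillation_bound (n : ℕ) (hn : 0 < n) (ε : ℝ) (hε : 0 < ε)
    (a b : Fin n → ℝ) (ha : ∀ i, 0 < a i) (hb : ∀ i, 0 < b i)
    (ha1 : ∑ i, a i = 1) (hb1 : ∑ i, b i = 1)
    (K : Matrix (Fin n) (Fin n) ℝ) (hK : ∀ i j, 0 < K i j)
    (f : (Fin n → ℝ) → (Fin n → ℝ) → ℝ)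
    (hf : ∀ α β, f α β = ∑ i, α i * a i + ∑ j, β j * b j -
      ε * ∑ i, ∑ j, exp (α i / ε) * K i j * exp (β j / ε))
    (αs βs : Fin n → ℝ) (hmax : ∀ α β, f α β ≤ f αs βs) :
    haveI : Nonempty (Fin n) := Fin.pos_iff_nonempty.mp hn
    ((⨆ i, αs i) - ⨅ i, αs i ≤
      ε * (-log ((⨅ i, min (a i) (b i)) *
        (⨅ p : Fin n × Fin n, K p.1 p.2) / (⨆ p : Fin n × Fin n, K p.1 p.2)))) ∧
    ((⨆ j, βs j) - ⨅ j, βs j ≤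
      ε * (-log ((⨅ i, min (a i) (b i)) *
        (⨅ p : Fin n × Fin n, K p.1 p.2) / (⨆ p : Fin n × Fin n, K p.1 p.2)))) := by
  haveI : Nonempty (Fin n) := Fin.pos_iff_nonempty.mp hn
  set ι := ⨅ i, min (a i) (b i) with hιdef
  set Km := ⨅ p : Fin n × Fin n, K p.1 p.2 with hKmdef
  set KM := ⨆ p : Fin n × Fin n, K p.1 p.2 with hKMdef
  -- positivity / bounds for ι, Km, KM
  have hι : 0 < ι := by
    obtain ⟨i0, hi0⟩ := Finite.exists_min (fun i => min (a i) (b i))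
    exact lt_of_lt_of_le (lt_min (ha i0) (hb i0)) (le_ciInf hi0)
  have hιa : ∀ i, ι ≤ a i := fun i =>
    (ciInf_le (Finite.bddBelow_range _) i).trans (min_le_left _ _)
  have hιb : ∀ i, ι ≤ b i := fun i =>
    (ciInf_le (Finite.bddBelow_range _) i).trans (min_le_right _ _)
  have hKm : 0 < Km := by
    obtain ⟨p0, hp0⟩ := Finite.exists_min (fun p : Fin n × Fin n => K p.1 p.2)
    exact lt_of_lt_of_le (hK p0.1 p0.2) (le_ciInf hp0)
  have hKmle : ∀ i j, Km ≤ K i j := fun i j => ciInf_le (Finite.bddBelow_range _) (i, j)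
  have hKMge : ∀ i j, K i j ≤ KM := fun i j =>
    le_ciSup (Finite.bddAbove_range fun p : Fin n × Fin n => K p.1 p.2) (i, j)
  have ha1' : ∀ i, a i ≤ 1 := fun i => ha1 ▸
    Finset.single_le_sum (fun k _ => (ha k).le) (Finset.mem_univ i)
  have hb1' : ∀ j, b j ≤ 1 := fun j => hb1 ▸
    Finset.single_le_sum (fun k _ => (hb k).le) (Finset.mem_univ j)
  -- first-order conditions
  have claimA : ∀ i, exp (αs i / ε) * (∑ j, K i j * exp (βs j / ε)) = a i := by
    intro i
    set S := ∑ j, K i j * exp (βs j / ε) with hS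
    set C := (∑ k ∈ Finset.univ.erase i, αs k * a k) + ∑ j, βs j * b j -
      ε * ∑ k ∈ Finset.univ.erase i, ∑ j, exp (αs k / ε) * K k j * exp (βs j / ε) with hC
    have hform : ∀ x, f (Function.update αs i x) βs = x * a i - ε * (exp (x / ε) * S) + C := by
      intro x
      rw [hf]
      have e1 : ∑ k, Function.update αs i x k * a k
          = x * a i + ∑ k ∈ Finset.univ.erase i, αs k * a k := by
        rw [← Finset.add_sum_erase Finset.univ (fun k => Function.update αs i x k * a k)
          (Finset.mem_univ i)]
        simp only [Function.update_self]
        congr 1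
        exact Finset.sum_congr rfl fun k hk => by
          rw [Function.update_of_ne (Finset.ne_of_mem_erase hk)]
      have e2 : ∑ k, ∑ j, exp (Function.update αs i x k / ε) * K k j * exp (βs j / ε)
          = exp (x / ε) * S +
            ∑ k ∈ Finset.univ.erase i, ∑ j, exp (αs k / ε) * K k j * exp (βs j / ε) := by
        rw [← Finset.add_sum_erase Finset.univ
          (fun k => ∑ j, exp (Function.update αs i x k / ε) * K k j * exp (βs j / ε))
          (Finset.mem_univ i)]
        simp only [Function.update_self]
        congr 1
        · rw [hS, Finset.mul_sum]
          exact Finset.sum_congr rfl fun j _ => by ring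
        · exact Finset.sum_congr rfl fun k hk => Finset.sum_congr rfl fun j _ => by
            rw [Function.update_of_ne (Finset.ne_of_mem_erase hk)]
      rw [e1, e2, hC]
      ring
    have hx : ∀ x, x * a i - ε * (exp (x / ε) * S) + C
        ≤ αs i * a i - ε * (exp (αs i / ε) * S) + C := by
      intro x
      rw [← hform x, ← hform (αs i), Function.update_eq_self]
      exact hmax _ _
    exact foc_aux ε hε (a i) S C (αs i) hx
  have claimB : ∀ j, exp (βs j / ε) * (∑ i, exp (αs i / ε) * K i j) = b j := by
    intro j
    set S := ∑ i, exp (αs i / ε) * K i j with hS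
    set C := (∑ k ∈ Finset.univ.erase j, βs k * b k) + ∑ i, αs i * a i -
      ε * ∑ k ∈ Finset.univ.erase j, ∑ i, exp (αs i / ε) * K i k * exp (βs k / ε) with hC
    have hform : ∀ x, f αs (Function.update βs j x) = x * b j - ε * (exp (x / ε) * S) + C := by
      intro x
      rw [hf]
      have e1 : ∑ k, Function.update βs j x k * b k
          = x * b j + ∑ k ∈ Finset.univ.erase j, βs k * b k := by
        rw [← Finset.add_sum_erase Finset.univ (fun k => Function.update βs j x k * b k)
          (Finset.mem_univ j)]
        simp only [Function.update_self]
        congr 1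
        exact Finset.sum_congr rfl fun k hk => by
          rw [Function.update_of_ne (Finset.ne_of_mem_erase hk)]
      have e2 : ∑ i, ∑ k, exp (αs i / ε) * K i k * exp (Function.update βs j x k / ε)
          = exp (x / ε) * S +
            ∑ k ∈ Finset.univ.erase j, ∑ i, exp (αs i / ε) * K i k * exp (βs k / ε) := by
        rw [Finset.sum_comm]
        rw [← Finset.add_sum_erase Finset.univ
          (fun k => ∑ i, exp (αs i / ε) * K i k * exp (Function.update βs j x k / ε))
          (Finset.mem_univ j)]
        simp only [Function.update_self]
        congr 1
        · rw [hS, Finset.mul_sum]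
          exact Finset.sum_congr rfl fun i _ => by ring
        · exact Finset.sum_congr rfl fun k hk => Finset.sum_congr rfl fun i _ => by
            rw [Function.update_of_ne (Finset.ne_of_mem_erase hk)]
      rw [e1, e2, hC]
      ring
    have hx : ∀ x, x * b j - ε * (exp (x / ε) * S) + C
        ≤ βs j * b j - ε * (exp (βs j / ε) * S) + C := by
      intro x
      rw [← hform x, ← hform (βs j), Function.update_eq_self]
      exact hmax _ _
    exact foc_aux ε hε (b j) S C (βs j) hx
  -- apply the oscillation lemma
  constructor
  · set E := ∑ j, exp (βs j / ε) with hE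
    have hEpos : 0 < E := Finset.sum_pos (fun j _ => exp_pos _) Finset.univ_nonempty
    refine osc_aux n ε ι Km KM E hε hι hKm αs a (fun i => ∑ j, K i j * exp (βs j / ε))
      claimA ha1' hιa hEpos (fun i => ?_) (fun i => ?_)
    · rw [hE, Finset.mul_sum]
      exact Finset.sum_le_sum fun j _ =>
        mul_le_mul_of_nonneg_right (hKmle i j) (exp_pos _).le
    · rw [hE, Finset.mul_sum]
      exact Finset.sum_le_sum fun j _ =>
        mul_le_mul_of_nonneg_right (hKMge i j) (exp_pos _).le
  · set E := ∑ i, exp (αs i / ε) with hE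
    have hEpos : 0 < E := Finset.sum_pos (fun i _ => exp_pos _) Finset.univ_nonempty
    refine osc_aux n ε ι Km KM E hε hι hKm βs b (fun j => ∑ i, exp (αs i / ε) * K i j)
      claimB hb1' hιb hEpos (fun j => ?_) (fun j => ?_)
    · rw [hE, Finset.mul_sum]
      refine Finset.sum_le_sum fun i _ => ?_
      rw [mul_comm (exp (αs i / ε))]
      exact mul_le_mul_of_nonneg_right (hKmle i j) (exp_pos _).le
    · rw [hE, Finset.mul_sum]
      refine Finset.sum_le_sum fun i _ => ?_
      rw [mul_comm (exp (αs i / ε))]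
      exact mul_le_mul_of_nonneg_right (hKMge i j) (exp_pos _).le
end

section
/- The function G(K) = sup_{α,β ∈ R^n} ⟨α,a⟩ + ⟨β,b⟩ - ε⟨e^{α/ε}, K e^{β/ε}⟩ is convex and differentiable on the open set of entrywise positive n×m matrices, with gradient ∇G(K) = -ε·e^{α*/ε}(e^{β*/ε})^T where (α*, β*) is any optimal dual solution. -/
open Real

lemma aux_max_stat {A c εp t₀ : ℝ} (hε : 0 < εp)
    (h : ∀ t, t * A - εp * c * Real.exp (t / εp) ≤ t₀ * A - εp * c * Real.exp (t₀ / εp)) :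
    A = c * Real.exp (t₀ / εp) := by
  have hmax : IsLocalMax (fun t => t * A - εp * c * Real.exp (t / εp)) t₀ :=
    Filter.Eventually.of_forall h
  have hd : HasDerivAt (fun t => t * A - εp * c * Real.exp (t / εp))
      (A - c * Real.exp (t₀ / εp)) t₀ := by
    have h1 : HasDerivAt (fun t : ℝ => t * A) A t₀ := by
      simpa using (hasDerivAt_id t₀).mul_const A
    have h2 : HasDerivAt (fun t : ℝ => Real.exp (t / εp)) (Real.exp (t₀ / εp) * (1 / εp)) t₀ := by
      have := (Real.hasDerivAt_exp (t₀ / εp)).comp t₀ ((hasDerivAt_id t₀).div_const εp)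
      simpa [Function.comp_def] using this
    have h3 := h2.const_mul (εp * c)
    have := h1.sub h3
    refine this.congr_deriv ?_
    field_simp
  have := hmax.hasDerivAt_eq_zero hd
  linarith

lemma aux_key_ineq {εp x k : ℝ} (hε : 0 < εp) (hx : 0 < x) (hk : 0 < k) (s : ℝ) :
    s * x - εp * (k * Real.exp (s / εp)) ≤ εp * x * (Real.log x - Real.log k - 1) := by
  have hy : 0 < k * Real.exp (s / εp) / x := by positivity
  have h1 := Real.log_le_sub_one_of_pos hy
  have h2 : Real.log (k * Real.exp (s / εp) / x) = Real.log k + s / εp - Real.log x := by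
    rw [Real.log_div (by positivity) (ne_of_gt hx), Real.log_mul (ne_of_gt hk) (Real.exp_ne_zero _),
      Real.log_exp]
  rw [h2] at h1
  have h3 := mul_le_mul_of_nonneg_left h1 (le_of_lt (mul_pos hε hx))
  have h4 : εp * x * (s / εp) = s * x := by field_simp
  have h5 : εp * x * (k * Real.exp (s / εp) / x - 1) = εp * (k * Real.exp (s / εp)) - εp * x := by
    field_simp
  nlinarith [h3]

lemma aux_bound {n m : ℕ} {ε : ℝ} (hε : 0 < ε) (a : Fin n → ℝ) (b : Fin m → ℝ)
    (w K : Fin n → Fin m → ℝ) (hw : ∀ i j, 0 < w i j) (hK : ∀ i j, 0 < K i j)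
    (hwa : ∀ i, ∑ j, w i j = a i) (hwb : ∀ j, ∑ i, w i j = b j)
    (α : Fin n → ℝ) (β : Fin m → ℝ) :
    ∑ i, α i * a i + ∑ j, β j * b j -
      ε * ∑ i, ∑ j, exp (α i / ε) * K i j * exp (β j / ε) ≤
    ∑ i, ∑ j, ε * w i j * (log (w i j) - log (K i j) - 1) := by
  have e1 : ∑ i, α i * a i = ∑ i, ∑ j, α i * w i j := by
    refine Finset.sum_congr rfl fun i _ => ?_
    rw [← hwa i, Finset.mul_sum]
  have e2 : ∑ j, β j * b j = ∑ i, ∑ j, β j * w i j := by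
    rw [Finset.sum_comm]
    refine Finset.sum_congr rfl fun j _ => ?_
    rw [← hwb j, Finset.mul_sum]
  have e3 : ε * ∑ i, ∑ j, exp (α i / ε) * K i j * exp (β j / ε)
      = ∑ i, ∑ j, ε * (K i j * exp ((α i + β j) / ε)) := by
    rw [Finset.mul_sum]
    refine Finset.sum_congr rfl fun i _ => ?_
    rw [Finset.mul_sum]
    refine Finset.sum_congr rfl fun j _ => ?_
    rw [add_div, Real.exp_add]
    ring
  rw [e1, e2, e3, ← Finset.sum_add_distrib, ← Finset.sum_sub_distrib]
  refine Finset.sum_le_sum fun i _ => ?_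
  rw [← Finset.sum_add_distrib, ← Finset.sum_sub_distrib]
  refine Finset.sum_le_sum fun j _ => ?_
  have := aux_key_ineq hε (hw i j) (hK i j) (α i + β j)
  nlinarith [this]

theorem dual_value_convex_differentiable (n m : ℕ) (ε : ℝ) (hε : 0 < ε)
    (a : Fin n → ℝ) (b : Fin m → ℝ)
    (ha : ∀ i, 0 < a i) (hb : ∀ j, 0 < b j)
    (ha1 : ∑ i, a i = 1) (hb1 : ∑ j, b j = 1)
    (F : (Fin n → Fin m → ℝ) → (Fin n → ℝ) → (Fin m → ℝ) → ℝ)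
    (hF : ∀ K α β, F K α β = ∑ i, α i * a i + ∑ j, β j * b j -
      ε * ∑ i, ∑ j, exp (α i / ε) * K i j * exp (β j / ε))
    (G : (Fin n → Fin m → ℝ) → ℝ)
    (hG : ∀ K, G K = ⨆ p : (Fin n → ℝ) × (Fin m → ℝ), F K p.1 p.2) :
    ConvexOn ℝ {K : (Fin n → Fin m → ℝ) | ∀ i j, 0 < K i j} G ∧
    ∀ K : (Fin n → Fin m → ℝ), (∀ i j, 0 < K i j) →
      ∀ αs : Fin n → ℝ, ∀ βs : Fin m → ℝ,
        (∀ α β, F K α β ≤ F K αs βs) →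
        ∃ L : (Fin n → Fin m → ℝ) →L[ℝ] ℝ,
          HasFDerivAt G L K ∧
          ∀ H : (Fin n → Fin m → ℝ),
            L H = -ε * ∑ i, ∑ j, exp (αs i / ε) * exp (βs j / ε) * H i j := by
  -- the independent coupling a ⊗ b
  have hab_a : ∀ i, ∑ j, a i * b j = a i := by
    intro i; rw [← Finset.mul_sum, hb1, mul_one]
  have hab_b : ∀ j, ∑ i, a i * b j = b j := by
    intro j
    have : ∑ i, a i * b j = (∑ i, a i) * b j := by rw [Finset.sum_mul]
    rw [this, ha1, one_mul]
  -- boundedness above of the dual family for each positive K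
  have bdd : ∀ K : Fin n → Fin m → ℝ, (∀ i j, 0 < K i j) →
      BddAbove (Set.range fun p : (Fin n → ℝ) × (Fin m → ℝ) => F K p.1 p.2) := by
    intro K hK
    refine ⟨∑ i, ∑ j, ε * (a i * b j) * (log (a i * b j) - log (K i j) - 1), ?_⟩
    rintro x ⟨p, rfl⟩
    show F K p.1 p.2 ≤ _
    rw [hF]
    exact aux_bound hε a b (fun i j => a i * b j) K
      (fun i j => mul_pos (ha i) (hb j)) hK hab_a hab_b p.1 p.2
  -- F is affine in K
  have haffine : ∀ (K₁ K₂ : Fin n → Fin m → ℝ) (α : Fin n → ℝ) (β : Fin m → ℝ)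
      (t u : ℝ), t + u = 1 →
      F (t • K₁ + u • K₂) α β = t * F K₁ α β + u * F K₂ α β := by
    intro K₁ K₂ α β t u htu
    rw [hF, hF, hF]
    have h1 : ∑ i, ∑ j, exp (α i / ε) * (t • K₁ + u • K₂) i j * exp (β j / ε)
        = t * (∑ i, ∑ j, exp (α i / ε) * K₁ i j * exp (β j / ε))
          + u * (∑ i, ∑ j, exp (α i / ε) * K₂ i j * exp (β j / ε)) := by
      rw [Finset.mul_sum, Finset.mul_sum, ← Finset.sum_add_distrib]
      refine Finset.sum_congr rfl fun i _ => ?_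
      rw [Finset.mul_sum, Finset.mul_sum, ← Finset.sum_add_distrib]
      refine Finset.sum_congr rfl fun j _ => ?_
      simp only [Pi.add_apply, Pi.smul_apply, smul_eq_mul]
      ring
    rw [h1]
    have h2 : t = 1 - u := by linarith
    rw [h2]; ring
  have hconv : ConvexOn ℝ {K : (Fin n → Fin m → ℝ) | ∀ i j, 0 < K i j} G := by
    constructor
    · intro K₁ hK₁ K₂ hK₂ t u ht hu htu i j
      simp only [Pi.add_apply, Pi.smul_apply, smul_eq_mul]
      rcases eq_or_lt_of_le ht with h | h
      · have hu1 : u = 1 := by linarith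
        simp [← h, hu1]; exact hK₂ i j
      · rcases eq_or_lt_of_le hu with h' | h'
        · have ht1 : t = 1 := by linarith
          simp [← h', ht1]; exact hK₁ i j
        · have := mul_pos h (hK₁ i j)
          have := mul_pos h' (hK₂ i j)
          linarith
    · intro K₁ hK₁ K₂ hK₂ t u ht hu htu
      simp only [smul_eq_mul]
      rw [hG]
      refine ciSup_le fun p => ?_
      rw [haffine K₁ K₂ p.1 p.2 t u htu]
      have h₁ : F K₁ p.1 p.2 ≤ G K₁ := by
        rw [hG]; exact le_ciSup (bdd K₁ hK₁) p
      have h₂ : F K₂ p.1 p.2 ≤ G K₂ := by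
        rw [hG]; exact le_ciSup (bdd K₂ hK₂) p
      have := mul_le_mul_of_nonneg_left h₁ ht
      have := mul_le_mul_of_nonneg_left h₂ hu
      linarith
  refine ⟨hconv, ?_⟩
  intro K₀ hK₀ αs βs hmax
  set E : Fin n → ℝ := fun i => exp (αs i / ε) with hE
  set Fm : Fin m → ℝ := fun j => exp (βs j / ε) with hFm
  set w : Fin n → Fin m → ℝ := fun i j => E i * K₀ i j * Fm j with hwdef
  have hw : ∀ i j, 0 < w i j := fun i j => by
    have := hK₀ i j; positivity
  -- marginal conditions from optimality
  have hwa : ∀ i, ∑ j, w i j = a i := by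
    intro i
    set c : ℝ := ∑ j, K₀ i j * Fm j with hc
    have hstat : a i = c * exp (αs i / ε) := by
      refine aux_max_stat hε (fun t => ?_)
      have h := hmax (Function.update αs i t) βs
      rw [hF, hF] at h
      have e1 : ∑ i', Function.update αs i t i' * a i'
          = t * a i + ∑ i' ∈ Finset.univ.erase i, αs i' * a i' := by
        rw [← Finset.add_sum_erase _ _ (Finset.mem_univ i)]
        rw [Function.update_self]
        congr 1
        refine Finset.sum_congr rfl fun i' hi' => ?_
        rw [Function.update_of_ne (Finset.ne_of_mem_erase hi')]
      have e1' : ∑ i', αs i' * a i'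
          = αs i * a i + ∑ i' ∈ Finset.univ.erase i, αs i' * a i' :=
        (Finset.add_sum_erase _ _ (Finset.mem_univ i)).symm
      have e2 : ∑ i', ∑ j, exp (Function.update αs i t i' / ε) * K₀ i' j * exp (βs j / ε)
          = exp (t / ε) * c
            + ∑ i' ∈ Finset.univ.erase i, ∑ j, exp (αs i' / ε) * K₀ i' j * exp (βs j / ε) := by
        rw [← Finset.add_sum_erase _ _ (Finset.mem_univ i)]
        congr 1
        · rw [hc, Finset.mul_sum]
          refine Finset.sum_congr rfl fun j _ => ?_
          rw [Function.update_self]; ring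
        · refine Finset.sum_congr rfl fun i' hi' => ?_
          refine Finset.sum_congr rfl fun j _ => ?_
          rw [Function.update_of_ne (Finset.ne_of_mem_erase hi')]
      have e2' : ∑ i', ∑ j, exp (αs i' / ε) * K₀ i' j * exp (βs j / ε)
          = exp (αs i / ε) * c
            + ∑ i' ∈ Finset.univ.erase i, ∑ j, exp (αs i' / ε) * K₀ i' j * exp (βs j / ε) := by
        rw [← Finset.add_sum_erase _ _ (Finset.mem_univ i)]
        congr 1
        rw [hc, Finset.mul_sum]
        refine Finset.sum_congr rfl fun j _ => ?_
        ring
      rw [e1, e2] at h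
      rw [e1', e2'] at h  -- careful: e1' rewrites RHS occurrences
      nlinarith [h]
    rw [hwdef]
    simp only
    calc ∑ j, E i * K₀ i j * Fm j = E i * c := by
          rw [hc, Finset.mul_sum]
          refine Finset.sum_congr rfl fun j _ => ?_
          ring
      _ = a i := by rw [hstat, hE]; ring
  have hwb : ∀ j, ∑ i, w i j = b j := by
    intro j
    set c : ℝ := ∑ i, E i * K₀ i j with hc
    have hstat : b j = c * exp (βs j / ε) := by
      refine aux_max_stat hε (fun t => ?_)
      have h := hmax αs (Function.update βs j t)
      rw [hF, hF] at h
      have e1 : ∑ j', Function.update βs j t j' * b j'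
          = t * b j + ∑ j' ∈ Finset.univ.erase j, βs j' * b j' := by
        rw [← Finset.add_sum_erase _ _ (Finset.mem_univ j)]
        rw [Function.update_self]
        congr 1
        refine Finset.sum_congr rfl fun j' hj' => ?_
        rw [Function.update_of_ne (Finset.ne_of_mem_erase hj')]
      have e1' : ∑ j', βs j' * b j'
          = βs j * b j + ∑ j' ∈ Finset.univ.erase j, βs j' * b j' :=
        (Finset.add_sum_erase _ _ (Finset.mem_univ j)).symm
      have swap1 : ∑ i, ∑ j', exp (αs i / ε) * K₀ i j' * exp (Function.update βs j t j' / ε)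
          = ∑ j', ∑ i, exp (αs i / ε) * K₀ i j' * exp (Function.update βs j t j' / ε) :=
        Finset.sum_comm
      have swap2 : ∑ i, ∑ j', exp (αs i / ε) * K₀ i j' * exp (βs j' / ε)
          = ∑ j', ∑ i, exp (αs i / ε) * K₀ i j' * exp (βs j' / ε) :=
        Finset.sum_comm
      rw [swap1, swap2] at h
      have e2 : ∑ j', ∑ i, exp (αs i / ε) * K₀ i j' * exp (Function.update βs j t j' / ε)
          = exp (t / ε) * c
            + ∑ j' ∈ Finset.univ.erase j, ∑ i, exp (αs i / ε) * K₀ i j' * exp (βs j' / ε) := by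
        rw [← Finset.add_sum_erase _ _ (Finset.mem_univ j)]
        congr 1
        · rw [hc, Finset.mul_sum]
          refine Finset.sum_congr rfl fun i _ => ?_
          rw [Function.update_self, hE]; ring
        · refine Finset.sum_congr rfl fun j' hj' => ?_
          refine Finset.sum_congr rfl fun i _ => ?_
          rw [Function.update_of_ne (Finset.ne_of_mem_erase hj')]
      have e2' : ∑ j', ∑ i, exp (αs i / ε) * K₀ i j' * exp (βs j' / ε)
          = exp (βs j / ε) * c
            + ∑ j' ∈ Finset.univ.erase j, ∑ i, exp (αs i / ε) * K₀ i j' * exp (βs j' / ε) := by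
        rw [← Finset.add_sum_erase _ _ (Finset.mem_univ j)]
        congr 1
        rw [hc, Finset.mul_sum]
        refine Finset.sum_congr rfl fun i _ => ?_
        rw [hE]; ring
      rw [e1, e2] at h
      rw [e1', e2'] at h
      nlinarith [h]
    rw [hwdef]
    simp only
    calc ∑ i, E i * K₀ i j * Fm j = c * Fm j := by
          rw [hc, Finset.sum_mul]
      _ = b j := by rw [hstat, hFm]
  -- value of G at K₀
  have hGK₀ : G K₀ = F K₀ αs βs := by
    refine le_antisymm ?_ ?_
    · rw [hG]; exact ciSup_le fun p => hmax p.1 p.2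
    · rw [hG]; exact le_ciSup (bdd K₀ hK₀) (αs, βs)
  set Ψ : (Fin n → Fin m → ℝ) → ℝ :=
    fun K => ∑ i, ∑ j, ε * w i j * (log (w i j) - log (K i j) - 1) with hΨdef
  have hGle : ∀ K, (∀ i j, 0 < K i j) → G K ≤ Ψ K := by
    intro K hK
    rw [hG, hΨdef]
    refine ciSup_le fun p => ?_
    have := aux_bound hε a b w K hw hK hwa hwb p.1 p.2
    rw [← hF] at this
    exact this
  have hΨK₀ : Ψ K₀ = F K₀ αs βs := by
    rw [hΨdef, hF]
    have e1 : ∀ i j, ε * w i j * (log (w i j) - log (K₀ i j) - 1)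
        = αs i * w i j + βs j * w i j
          - ε * (exp (αs i / ε) * K₀ i j * exp (βs j / ε)) := by
      intro i j
      have hEpos : 0 < E i := by simp only [hE]; positivity
      have hFmpos : 0 < Fm j := by simp only [hFm]; positivity
      have hlog : log (w i j) = αs i / ε + log (K₀ i j) + βs j / ε := by
        rw [hwdef]
        simp only
        rw [Real.log_mul (ne_of_gt (mul_pos hEpos (hK₀ i j))) (ne_of_gt hFmpos),
            Real.log_mul (ne_of_gt hEpos) (ne_of_gt (hK₀ i j))]
        simp only [hE, hFm, Real.log_exp]
      have hw' : exp (αs i / ε) * K₀ i j * exp (βs j / ε) = w i j := by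
        rw [hwdef, hE, hFm]
      rw [hlog, hw']
      field_simp
      ring
    have f1 : ∑ i, αs i * a i = ∑ i, ∑ j, αs i * w i j := by
      refine Finset.sum_congr rfl fun i _ => ?_
      rw [← hwa i, Finset.mul_sum]
    have f2 : ∑ j, βs j * b j = ∑ i, ∑ j, βs j * w i j := by
      rw [Finset.sum_comm]
      refine Finset.sum_congr rfl fun j _ => ?_
      rw [← hwb j, Finset.mul_sum]
    have f3 : ε * ∑ i, ∑ j, exp (αs i / ε) * K₀ i j * exp (βs j / ε)
        = ∑ i, ∑ j, ε * (exp (αs i / ε) * K₀ i j * exp (βs j / ε)) := by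
      rw [Finset.mul_sum]
      refine Finset.sum_congr rfl fun i _ => ?_
      rw [Finset.mul_sum]
    rw [f1, f2, f3, ← Finset.sum_add_distrib, ← Finset.sum_sub_distrib]
    refine Finset.sum_congr rfl fun i _ => ?_
    rw [← Finset.sum_add_distrib, ← Finset.sum_sub_distrib]
    refine Finset.sum_congr rfl fun j _ => ?_
    rw [e1 i j]
  classical
  set P : Fin n → Fin m → ((Fin n → Fin m → ℝ) →L[ℝ] ℝ) :=
    fun i j => (ContinuousLinearMap.proj j).comp
      (ContinuousLinearMap.proj (R := ℝ) (φ := fun _ : Fin n => Fin m → ℝ) i) with hP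
  set L : (Fin n → Fin m → ℝ) →L[ℝ] ℝ :=
    ∑ i, ∑ j, (-(ε * E i * Fm j)) • P i j with hLdef
  have hLapp : ∀ H, L H = ∑ i, ∑ j, -(ε * E i * Fm j) * H i j := by
    intro H
    rw [hLdef]
    rw [ContinuousLinearMap.sum_apply]
    refine Finset.sum_congr rfl fun i _ => ?_
    rw [ContinuousLinearMap.sum_apply]
    refine Finset.sum_congr rfl fun j _ => ?_
    rw [ContinuousLinearMap.smul_apply, hP]
    simp [ContinuousLinearMap.proj_apply, smul_eq_mul]
  have hΨderiv : HasFDerivAt Ψ L K₀ := by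
    rw [hΨdef, hLdef]
    refine HasFDerivAt.fun_sum fun i _ => ?_
    refine HasFDerivAt.fun_sum fun j _ => ?_
    have h0 : HasFDerivAt (fun K : Fin n → Fin m → ℝ => K i j) (P i j) K₀ :=
      (P i j).hasFDerivAt
    have hlog : HasFDerivAt (fun K : Fin n → Fin m → ℝ => log (K i j))
        ((K₀ i j)⁻¹ • P i j) K₀ :=
      by have := (Real.hasDerivAt_log (ne_of_gt (hK₀ i j))).comp_hasFDerivAt K₀ h0; exact this
    have h1 := hlog.const_mul (-(ε * w i j))
    have h2 := h1.const_add (ε * w i j * (log (w i j) - 1))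
    have hfun : (fun K : Fin n → Fin m → ℝ =>
        ε * w i j * (log (w i j) - 1) + -(ε * w i j) * log (K i j))
        = fun K : Fin n → Fin m → ℝ => ε * w i j * (log (w i j) - log (K i j) - 1) := by
      funext K; ring
    have hcoef : (-(ε * w i j)) • ((K₀ i j)⁻¹ • P i j) = (-(ε * E i * Fm j)) • P i j := by
      have hk : K₀ i j ≠ 0 := ne_of_gt (hK₀ i j)
      rw [smul_smul]
      congr 1
      simp only [hwdef]
      field_simp
    rw [hfun, hcoef] at h2
    exact h2
  have hSopen : IsOpen {K : Fin n → Fin m → ℝ | ∀ i j, 0 < K i j} := by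
    have hs : {K : Fin n → Fin m → ℝ | ∀ i j, 0 < K i j}
        = ⋂ i, ⋂ j, (fun K : Fin n → Fin m → ℝ => K i j) ⁻¹' Set.Ioi 0 := by
      ext K; simp [Set.mem_iInter, Set.mem_preimage]
    rw [hs]
    exact isOpen_iInter_of_finite fun i => isOpen_iInter_of_finite fun j =>
      isOpen_Ioi.preimage ((continuous_apply j).comp (continuous_apply i))
  have hnhds : ∀ᶠ H in nhds (0 : Fin n → Fin m → ℝ), ∀ i j, 0 < (K₀ + H) i j := by
    have hcont : Continuous fun H : Fin n → Fin m → ℝ => K₀ + H :=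
      continuous_const.add continuous_id
    have h0 : (fun H : Fin n → Fin m → ℝ => K₀ + H) ⁻¹'
        {K : Fin n → Fin m → ℝ | ∀ i j, 0 < K i j} ∈ nhds (0 : Fin n → Fin m → ℝ) := by
      apply (hSopen.preimage hcont).mem_nhds
      simp only [Set.mem_preimage, add_zero, Set.mem_setOf_eq]
      exact hK₀
    exact h0
  refine ⟨L, ?_, ?_⟩
  · rw [hasFDerivAt_iff_isLittleO_nhds_zero]
    have eΨ := hasFDerivAt_iff_isLittleO_nhds_zero.mp hΨderiv
    refine Asymptotics.IsBigO.trans_isLittleO ?_ eΨ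
    rw [Asymptotics.isBigO_iff]
    refine ⟨1, ?_⟩
    filter_upwards [hnhds] with H hH
    have haff : F (K₀ + H) αs βs = F K₀ αs βs + L H := by
      rw [hF, hF, hLapp]
      have hsplit : ∑ i, ∑ j, exp (αs i / ε) * (K₀ + H) i j * exp (βs j / ε)
          = ∑ i, ∑ j, exp (αs i / ε) * K₀ i j * exp (βs j / ε)
            + ∑ i, ∑ j, exp (αs i / ε) * H i j * exp (βs j / ε) := by
        rw [← Finset.sum_add_distrib]
        refine Finset.sum_congr rfl fun i _ => ?_
        rw [← Finset.sum_add_distrib]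
        refine Finset.sum_congr rfl fun j _ => ?_
        simp only [Pi.add_apply]; ring
      have hLsum : ∑ i, ∑ j, -(ε * E i * Fm j) * H i j
          = -(ε * ∑ i, ∑ j, exp (αs i / ε) * H i j * exp (βs j / ε)) := by
        rw [Finset.mul_sum, ← Finset.sum_neg_distrib]
        refine Finset.sum_congr rfl fun i _ => ?_
        rw [Finset.mul_sum, ← Finset.sum_neg_distrib]
        refine Finset.sum_congr rfl fun j _ => ?_
        simp only [hE, hFm]
        ring
      rw [hsplit, hLsum]
      ring
    have hlow : 0 ≤ G (K₀ + H) - G K₀ - L H := by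
      have h1 : F K₀ αs βs + L H ≤ G (K₀ + H) := by
        rw [← haff, hG]
        exact le_ciSup (bdd _ hH) (αs, βs)
      rw [hGK₀]
      linarith
    have hup : G (K₀ + H) - G K₀ - L H ≤ Ψ (K₀ + H) - Ψ K₀ - L H := by
      have := hGle (K₀ + H) hH
      rw [hGK₀, hΨK₀]
      linarith
    rw [Real.norm_eq_abs, Real.norm_eq_abs, one_mul,
      abs_of_nonneg hlow, abs_of_nonneg (le_trans hlow hup)]
    exact hup
  · intro H
    rw [hLapp, Finset.mul_sum]
    refine Finset.sum_congr rfl fun i _ => ?_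
    rw [Finset.mul_sum]
    refine Finset.sum_congr rfl fun j _ => ?_
    simp only [hE, hFm]
    ring
end
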